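/- arXiv:1811.11099 — 2 statements merged into one kernel-verified Lean document; each statement's English description precedes it below -/
import Mathlib

section
/- Let α > 2, s > 0, σ > 0. Let Y be a random vector in ℝ² with i.i.d. centered Gaussian coordinates of variance σ², and let G be an exponential random variable with mean 1, independent of Y. Then ∫_{ℝ²} E[1 − exp(−s·G·‖x + Y‖^{−α})] dx = π·s^{2/α}·Γ(1 + 2/α)·Γ(1 − 2/α), where Γ denotes the Gamma function; in particular, the value does not depend on σ. -/
open MeasureTheory ProbabilityTheory Real

section Stmt6AuxSection
open Set Filter
open scoped ENNReal NNReal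

namespace Stmt6Aux

lemma lintegral_image_deriv {s : Set ℝ} {f f' : ℝ → ℝ} (hs : MeasurableSet s)
    (hf' : ∀ x ∈ s, HasDerivWithinAt f (f' x) s x) (hf : Set.InjOn f s) (g : ℝ → ℝ≥0∞) :
    ∫⁻ x in f '' s, g x = ∫⁻ x in s, ENNReal.ofReal |f' x| * g (f x) := by
  simpa only [ContinuousLinearMap.det_toSpanSingleton] using
    lintegral_image_eq_lintegral_abs_det_fderiv_mul volume hs
      (fun x hx => (hf' x hx).hasFDerivWithinAt) hf g

lemma gamma_lintegral {a : ℝ} (ha : 0 < a) :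
    ∫⁻ x in Ioi (0:ℝ), ENNReal.ofReal (Real.exp (-x) * x ^ (a - 1)) =
      ENNReal.ofReal (Real.Gamma a) := by
  rw [Real.Gamma_eq_integral ha]
  rw [ofReal_integral_eq_lintegral_ofReal (Real.GammaIntegral_convergent ha)]
  filter_upwards [ae_restrict_mem measurableSet_Ioi] with x hx
  have : (0:ℝ) < x := hx
  positivity

end Stmt6Aux

namespace Stmt6Aux

lemma spatial (α : ℝ) (hα : 2 < α) {c : ℝ} (hc : 0 ≤ c) :
    ∫⁻ z : ℂ, ENNReal.ofReal (1 - Real.exp (-(c * ‖z‖ ^ (-α)))) =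
      ENNReal.ofReal (π * c ^ (2/α) * Real.Gamma (1 - 2/α)) := by
  have hα0 : (0:ℝ) < α := by linarith
  have hp : (0:ℝ) < 2/α := by positivity
  have hp1 : 2/α < 1 := by rw [div_lt_one hα0]; linarith
  rcases eq_or_lt_of_le hc with hc0 | hcpos
  · simp [← hc0, Real.zero_rpow (ne_of_gt hp)]
  clear hc
  have hm : Measurable fun z : ℂ => 1 - Real.exp (-(c * ‖z‖ ^ (-α))) := by
    exact measurable_const.sub
      (Real.measurable_exp.comp ((continuous_norm.measurable.pow measurable_const).const_mul c).neg)
  have hnn : ∀ z : ℂ, 0 ≤ 1 - Real.exp (-(c * ‖z‖ ^ (-α))) := by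
    intro z
    rw [sub_nonneg, Real.exp_le_one_iff, neg_nonpos]
    exact mul_nonneg hcpos.le (Real.rpow_nonneg (norm_nonneg z) _)
  rw [lintegral_eq_lintegral_meas_lt volume (Eventually.of_forall hnn) hm.aemeasurable]
  rw [← Ioo_union_Ici_eq_Ioi (zero_lt_one (α := ℝ)),
    lintegral_union measurableSet_Ici ((Set.Iio_disjoint_Ici le_rfl).mono_left Set.Ioo_subset_Iio_self)]
  have h1 : ∫⁻ t in Ici (1:ℝ),
      volume {z : ℂ | t < 1 - Real.exp (-(c * ‖z‖ ^ (-α)))} = 0 := by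
    rw [← lintegral_zero (μ := volume.restrict (Ici (1:ℝ)))]
    refine setLIntegral_congr_fun measurableSet_Ici (fun t ht => ?_)
    convert measure_empty
    · ext z
      simp only [mem_setOf_eq, mem_empty_iff_false, iff_false, not_lt]
      calc 1 - Real.exp (-(c * ‖z‖ ^ (-α))) ≤ 1 := by
            have := Real.exp_pos (-(c * ‖z‖ ^ (-α))); linarith
        _ ≤ t := ht
    · infer_instance
  rw [h1, add_zero]
  have h2 : ∀ t ∈ Ioo (0:ℝ) 1,
      volume {z : ℂ | t < 1 - Real.exp (-(c * ‖z‖ ^ (-α)))} =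
        ENNReal.ofReal (π * (c / (-Real.log (1 - t))) ^ (2/α)) := by
    intro t ht
    obtain ⟨ht0, ht1⟩ := ht
    have h1t : (0:ℝ) < 1 - t := by linarith
    have hL : 0 < -Real.log (1 - t) := by
      have := Real.log_neg h1t (by linarith)
      linarith
    set L := -Real.log (1 - t) with hLdef
    set R := (c / L) ^ (1/α) with hRdef
    have hR : 0 < R := Real.rpow_pos_of_pos (div_pos hcpos hL) _
    have hset : {z : ℂ | t < 1 - Real.exp (-(c * ‖z‖ ^ (-α)))} =
        Metric.ball (0:ℂ) R \ {0} := by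
      ext z
      simp only [mem_setOf_eq, mem_diff, Metric.mem_ball, dist_zero_right,
        mem_singleton_iff, ← (norm_ne_zero_iff : ‖z‖ ≠ 0 ↔ z ≠ 0)]
      set r := ‖z‖ with hrdef
      have hr0 : 0 ≤ r := norm_nonneg z
      constructor
      · intro h
        have hexp : Real.exp (-(c * r ^ (-α))) < Real.exp (Real.log (1 - t)) := by
          rw [Real.exp_log h1t]; linarith
        have hLlt : L < c * r ^ (-α) := by
          rw [Real.exp_lt_exp] at hexp
          rw [hLdef]; linarith
        have hrne : r ≠ 0 := by
          intro h0
          rw [h0, Real.zero_rpow (by linarith : -α ≠ 0), mul_zero] at hLlt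
          linarith
        have hrpos : 0 < r := lt_of_le_of_ne hr0 (Ne.symm hrne)
        refine ⟨?_, hrne⟩
        have hra : r ^ α < c / L := by
          rw [lt_div_iff₀ hL]
          have : L < c / r ^ α := by
            rwa [Real.rpow_neg hr0, mul_comm, ← div_eq_inv_mul] at hLlt
          calc r ^ α * L < r ^ α * (c / r ^ α) := by
                exact mul_lt_mul_of_pos_left this (Real.rpow_pos_of_pos hrpos α)
            _ = c := by field_simp
        calc r = (r ^ α) ^ (1/α) := by
              rw [← Real.rpow_mul hr0, mul_one_div, div_self (ne_of_gt hα0), Real.rpow_one]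
          _ < R := by
              rw [hRdef]
              exact Real.rpow_lt_rpow (Real.rpow_nonneg hr0 α) hra (by positivity)
      · rintro ⟨hlt, hne⟩
        have hrpos : 0 < r := lt_of_le_of_ne hr0 (Ne.symm hne)
        have hra : r ^ α < c / L := by
          calc r ^ α < R ^ α := Real.rpow_lt_rpow hr0 hlt hα0
            _ = c / L := by
              rw [hRdef, ← Real.rpow_mul (div_pos hcpos hL).le, one_div_mul_cancel (ne_of_gt hα0),
                Real.rpow_one]
        have hLlt : L < c * r ^ (-α) := by
          rw [Real.rpow_neg hr0, mul_comm, ← div_eq_inv_mul]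
          rw [lt_div_iff₀ (Real.rpow_pos_of_pos hrpos α)] at *
          calc L * r ^ α < (c / L) * L := by
                rw [mul_comm (c / L) L]
                exact mul_lt_mul_of_pos_left hra hL
            _ = c := by field_simp
        have : Real.exp (-(c * r ^ (-α))) < 1 - t := by
          rw [← Real.exp_log h1t, Real.exp_lt_exp]
          rw [hLdef] at hLlt; linarith
        linarith
    rw [hset, measure_diff_null (by
      have : ({0} : Set ℂ) = Metric.closedBall 0 0 := (Metric.closedBall_zero (x := (0:ℂ))).symm
      rw [this, Complex.volume_closedBall]
      simp), Complex.volume_ball]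
    rw [← ENNReal.ofReal_pow hR.le, ← NNReal.coe_real_pi, ENNReal.ofReal_coe_nnreal.symm]
    rw [← ENNReal.ofReal_mul (by positivity)]
    congr 1
    rw [hRdef, ← Real.rpow_natCast ((c/L) ^ (1/α)) 2, ← Real.rpow_mul (div_pos hcpos hL).le]
    rw [mul_comm]
    congr 1
    push_cast
    ring
  rw [setLIntegral_congr_fun measurableSet_Ioo h2]
  have himg : (fun u : ℝ => 1 - Real.exp (-u)) '' Ioi 0 = Ioo 0 1 := by
    ext t
    constructor
    · rintro ⟨u, hu, rfl⟩
      have hu' : (0:ℝ) < u := hu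
      have hlt : Real.exp (-u) < 1 := by
        rw [Real.exp_lt_one_iff]; linarith
      have hpos := Real.exp_pos (-u)
      exact ⟨by simp only []; linarith, by simp only []; linarith⟩
    · rintro ⟨ht0, ht1⟩
      refine ⟨-Real.log (1 - t), ?_, ?_⟩
      · have := Real.log_neg (by linarith : (0:ℝ) < 1 - t) (by linarith)
        exact mem_Ioi.2 (by linarith)
      · show 1 - Real.exp (-(-Real.log (1 - t))) = t
        rw [neg_neg, Real.exp_log (by linarith : (0:ℝ) < 1 - t)]; ring
  have hinj : Set.InjOn (fun u : ℝ => 1 - Real.exp (-u)) (Ioi 0) := by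
    have hsm : StrictMono (fun u : ℝ => 1 - Real.exp (-u)) := by
      intro a b hab
      simp only
      have : Real.exp (-b) < Real.exp (-a) := Real.exp_lt_exp.2 (by linarith)
      linarith
    exact hsm.injective.injOn
  have hder : ∀ u ∈ Ioi (0:ℝ),
      HasDerivWithinAt (fun u : ℝ => 1 - Real.exp (-u)) (Real.exp (-u)) (Ioi 0) u := by
    intro u _
    have h := ((Real.hasDerivAt_exp (-u)).comp u (hasDerivAt_neg u)).const_sub 1
    simpa using h.hasDerivWithinAt
  rw [← himg, lintegral_image_deriv measurableSet_Ioi hder hinj]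
  have h3 : ∀ u ∈ Ioi (0:ℝ),
      ENNReal.ofReal |Real.exp (-u)| *
        ENNReal.ofReal (π * (c / (-Real.log (1 - (1 - Real.exp (-u))))) ^ (2/α)) =
      ENNReal.ofReal (π * c ^ (2/α)) *
        ENNReal.ofReal (Real.exp (-u) * u ^ ((1 - 2/α) - 1)) := by
    intro u hu
    have hu' : (0:ℝ) < u := hu
    have e1 : 1 - (1 - Real.exp (-u)) = Real.exp (-u) := by ring
    rw [e1, Real.log_exp, neg_neg]
    rw [abs_of_pos (Real.exp_pos _)]
    rw [← ENNReal.ofReal_mul (Real.exp_pos _).le, ← ENNReal.ofReal_mul (by positivity)]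
    congr 1
    have e2 : (c / u) ^ (2/α) = c ^ (2/α) * u ^ (-(2/α)) := by
      rw [Real.div_rpow hcpos.le hu'.le, Real.rpow_neg hu'.le, div_eq_mul_inv]
    have e3 : u ^ ((1 - 2/α) - 1) = u ^ (-(2/α)) := by
      congr 1; ring
    rw [e2, e3]; ring
  rw [setLIntegral_congr_fun measurableSet_Ioi h3]
  rw [lintegral_const_mul' _ _ ENNReal.ofReal_ne_top]
  rw [gamma_lintegral (by linarith : (0:ℝ) < 1 - 2/α)]
  rw [← ENNReal.ofReal_mul (by positivity), mul_assoc]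

lemma ae_nonneg {Ω : Type*} [MeasureSpace Ω] [IsProbabilityMeasure (ℙ : Measure Ω)]
    {G : Ω → ℝ} (hGmeas : Measurable G)
    (hGexp : ∀ g : ℝ, 0 ≤ g → ℙ {ω | g ≤ G ω} = ENNReal.ofReal (Real.exp (-g))) :
    ∀ᵐ ω ∂(ℙ : Measure Ω), 0 ≤ G ω := by
  have h0 := hGexp 0 le_rfl
  simp only [neg_zero, Real.exp_zero, ENNReal.ofReal_one] at h0
  have hS : MeasurableSet {ω | 0 ≤ G ω} := measurableSet_le measurable_const hGmeas
  rw [ae_iff]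
  have : {ω | ¬ 0 ≤ G ω} = {ω | 0 ≤ G ω}ᶜ := rfl
  rw [this, measure_compl hS (measure_ne_top _ _), h0, measure_univ, tsub_self]

lemma moment {Ω : Type*} [MeasureSpace Ω] [IsProbabilityMeasure (ℙ : Measure Ω)]
    {G : Ω → ℝ} (hGmeas : Measurable G)
    (hGexp : ∀ g : ℝ, 0 ≤ g → ℙ {ω | g ≤ G ω} = ENNReal.ofReal (Real.exp (-g)))
    {p : ℝ} (hp : 0 < p) :
    ∫⁻ ω, ENNReal.ofReal (G ω ^ p) = ENNReal.ofReal (Real.Gamma (1 + p)) := by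
  have hGnn := ae_nonneg hGmeas hGexp
  have hnnp : ∀ᵐ ω ∂(ℙ : Measure Ω), 0 ≤ G ω ^ p := by
    filter_upwards [hGnn] with ω hω
    exact Real.rpow_nonneg hω p
  rw [lintegral_eq_lintegral_meas_le ℙ hnnp (hGmeas.pow measurable_const).aemeasurable]
  have h2 : ∀ t ∈ Ioi (0:ℝ),
      (ℙ : Measure Ω) {ω | t ≤ G ω ^ p} = ENNReal.ofReal (Real.exp (-(t ^ (1/p)))) := by
    intro t ht
    have ht' : (0:ℝ) < t := ht
    have hmc : (ℙ : Measure Ω) {ω | t ≤ G ω ^ p} = ℙ {ω | t ^ (1/p) ≤ G ω} := by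
      apply measure_congr
      rw [Filter.eventuallyEq_set]
      filter_upwards [hGnn] with ω hω
      show t ≤ G ω ^ p ↔ t ^ (1/p) ≤ G ω
      constructor
      · intro h
        calc t ^ (1/p) ≤ (G ω ^ p) ^ (1/p) :=
              Real.rpow_le_rpow ht'.le h (by positivity)
          _ = G ω := by
              rw [← Real.rpow_mul hω, mul_one_div, div_self (ne_of_gt hp), Real.rpow_one]
      · intro h
        calc t = (t ^ (1/p)) ^ p := by
              rw [← Real.rpow_mul ht'.le, one_div_mul_cancel (ne_of_gt hp), Real.rpow_one]
          _ ≤ G ω ^ p := Real.rpow_le_rpow (Real.rpow_nonneg ht'.le _) h hp.le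
    rw [hmc, hGexp _ (Real.rpow_nonneg ht'.le _)]
  rw [setLIntegral_congr_fun measurableSet_Ioi h2]
  have himg : (fun u : ℝ => u ^ p) '' Ioi 0 = Ioi 0 := by
    ext t
    constructor
    · rintro ⟨u, hu, rfl⟩
      exact Real.rpow_pos_of_pos hu p
    · intro ht
      have ht' : (0:ℝ) < t := ht
      refine ⟨t ^ (1/p), Real.rpow_pos_of_pos ht' _, ?_⟩
      show (t ^ (1/p)) ^ p = t
      rw [← Real.rpow_mul ht'.le, one_div_mul_cancel (ne_of_gt hp), Real.rpow_one]
  have hinj : Set.InjOn (fun u : ℝ => u ^ p) (Ioi 0) := by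
    intro a ha b hb h
    have ha' : (0:ℝ) < a := ha
    have hb' : (0:ℝ) < b := hb
    have h' : a ^ p = b ^ p := h
    have : (a ^ p) ^ (1/p) = (b ^ p) ^ (1/p) := by rw [h']
    rwa [← Real.rpow_mul ha'.le, ← Real.rpow_mul hb'.le, mul_one_div,
      div_self (ne_of_gt hp), Real.rpow_one, Real.rpow_one] at this
  have hder : ∀ u ∈ Ioi (0:ℝ),
      HasDerivWithinAt (fun u : ℝ => u ^ p) (p * u ^ (p - 1)) (Ioi 0) u := by
    intro u hu
    exact (Real.hasDerivAt_rpow_const (Or.inl (ne_of_gt hu))).hasDerivWithinAt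
  conv_lhs => rw [← himg]
  rw [lintegral_image_deriv measurableSet_Ioi hder hinj]
  have h3 : ∀ u ∈ Ioi (0:ℝ),
      ENNReal.ofReal |p * u ^ (p - 1)| * ENNReal.ofReal (Real.exp (-((u ^ p) ^ (1/p)))) =
      ENNReal.ofReal p * ENNReal.ofReal (Real.exp (-u) * u ^ (p - 1)) := by
    intro u hu
    have hu' : (0:ℝ) < u := hu
    have e1 : (u ^ p) ^ (1/p) = u := by
      rw [← Real.rpow_mul hu'.le, mul_one_div, div_self (ne_of_gt hp), Real.rpow_one]
    rw [e1, abs_of_pos (by positivity)]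
    rw [← ENNReal.ofReal_mul (by positivity), ← ENNReal.ofReal_mul hp.le]
    congr 1
    ring
  rw [setLIntegral_congr_fun measurableSet_Ioi h3]
  rw [lintegral_const_mul' _ _ ENNReal.ofReal_ne_top]
  rw [gamma_lintegral hp]
  rw [← ENNReal.ofReal_mul hp.le, add_comm, ← Real.Gamma_add_one (ne_of_gt hp)]

end Stmt6Aux


end Stmt6AuxSection

/-- Let `α > 2`, `s > 0`, `σ > 0`. Let `Y` be a random vector in `ℝ²` with i.i.d. centered
Gaussian coordinates of variance `σ²`, and `G` a unit-mean exponential random variable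
independent of `Y`. Then
`∫_{ℝ²} E[1 − exp(−s·G·‖x + Y‖^{−α})] dx = π·s^{2/α}·Γ(1 + 2/α)·Γ(1 − 2/α)`;
in particular the value does not depend on `σ`. -/
theorem stmt_6 {Ω : Type*} [MeasureSpace Ω] [IsProbabilityMeasure (ℙ : Measure Ω)]
    (α s σ : ℝ) (hα : 2 < α) (hs : 0 < s) (hσ : 0 < σ)
    (Y : Ω → ℝ × ℝ) (G : Ω → ℝ)
    (hYmeas : Measurable Y) (hGmeas : Measurable G)
    (hY1gauss : Measure.map (fun ω => (Y ω).1) ℙ = gaussianReal 0 ⟨σ ^ 2, sq_nonneg σ⟩)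
    (hY2gauss : Measure.map (fun ω => (Y ω).2) ℙ = gaussianReal 0 ⟨σ ^ 2, sq_nonneg σ⟩)
    (hYindep : IndepFun (fun ω => (Y ω).1) (fun ω => (Y ω).2) ℙ)
    (hGexp : ∀ g : ℝ, 0 ≤ g → ℙ {ω | g ≤ G ω} = ENNReal.ofReal (Real.exp (-g)))
    (hGYindep : IndepFun Y G ℙ) :
    ∫ x : ℝ × ℝ, ∫ ω, (1 - Real.exp (-(s * G ω *
        Real.sqrt ((x.1 + (Y ω).1) ^ 2 + (x.2 + (Y ω).2) ^ 2) ^ (-α))))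
      = π * s ^ (2 / α) * Real.Gamma (1 + 2 / α) * Real.Gamma (1 - 2 / α) := by
  have hα0 : (0:ℝ) < α := by linarith
  have hp : (0:ℝ) < 2/α := by positivity
  have hp1 : 2/α < 1 := by rw [div_lt_one hα0]; linarith
  have hg1 : 0 < Real.Gamma (1 - 2/α) := Real.Gamma_pos_of_pos (by linarith)
  have hg2 : 0 < Real.Gamma (1 + 2/α) := Real.Gamma_pos_of_pos (by positivity)
  have hGnn := Stmt6Aux.ae_nonneg hGmeas hGexp
  set f : ℝ × ℝ → Ω → ℝ := fun x ω =>
    1 - Real.exp (-(s * G ω * Real.sqrt ((x.1 + (Y ω).1) ^ 2 + (x.2 + (Y ω).2) ^ 2) ^ (-α)))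
    with hfdef
  have hFm : Measurable fun q : (ℝ × ℝ) × Ω => f q.1 q.2 := by
    apply measurable_const.sub
    apply Real.measurable_exp.comp
    apply Measurable.neg
    refine Measurable.mul ((hGmeas.comp measurable_snd).const_mul s) ?_
    refine Measurable.pow ?_ measurable_const
    refine Real.continuous_sqrt.measurable.comp ?_
    refine Measurable.add (Measurable.pow_const ?_ 2) (Measurable.pow_const ?_ 2)
    · exact (measurable_fst.fst).add ((hYmeas.comp measurable_snd).fst)
    · exact (measurable_fst.snd).add ((hYmeas.comp measurable_snd).snd)
  have hf_nn : ∀ x : ℝ × ℝ, ∀ᵐ ω ∂(ℙ : Measure Ω), 0 ≤ f x ω := by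
    intro x
    filter_upwards [hGnn] with ω hω
    show 0 ≤ 1 - Real.exp (-(s * G ω *
      Real.sqrt ((x.1 + (Y ω).1) ^ 2 + (x.2 + (Y ω).2) ^ 2) ^ (-α)))
    rw [sub_nonneg, Real.exp_le_one_iff, neg_nonpos]
    exact mul_nonneg (mul_nonneg hs.le hω) (Real.rpow_nonneg (Real.sqrt_nonneg _) _)
  have hf_le : ∀ x ω, f x ω ≤ 1 := by
    intro x ω
    have := Real.exp_pos (-(s * G ω *
      Real.sqrt ((x.1 + (Y ω).1) ^ 2 + (x.2 + (Y ω).2) ^ 2) ^ (-α)))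
    show 1 - Real.exp (-(s * G ω *
      Real.sqrt ((x.1 + (Y ω).1) ^ 2 + (x.2 + (Y ω).2) ^ 2) ^ (-α))) ≤ 1
    linarith
  have hIle : ∀ x : ℝ × ℝ, ∫⁻ ω, ENNReal.ofReal (f x ω) ∂ℙ ≤ 1 := by
    intro x
    calc ∫⁻ ω, ENNReal.ofReal (f x ω) ∂ℙ ≤ ∫⁻ _, 1 ∂(ℙ : Measure Ω) :=
        lintegral_mono fun ω => ENNReal.ofReal_le_one.2 (hf_le x ω)
      _ = 1 := by simp
  have step1 : ∀ x : ℝ × ℝ, ∫ ω, f x ω = (∫⁻ ω, ENNReal.ofReal (f x ω) ∂ℙ).toReal :=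
    fun x => integral_eq_lintegral_of_nonneg_ae (hf_nn x)
      ((hFm.comp (measurable_const.prodMk measurable_id)).aestronglyMeasurable)
  calc ∫ x : ℝ × ℝ, ∫ ω, f x ω
      = ∫ x : ℝ × ℝ, (∫⁻ ω, ENNReal.ofReal (f x ω) ∂ℙ).toReal :=
        integral_congr_ae (ae_of_all _ step1)
    _ = (∫⁻ x : ℝ × ℝ, ∫⁻ ω, ENNReal.ofReal (f x ω) ∂ℙ).toReal := by
        have hinner : Measurable fun x : ℝ × ℝ => ∫⁻ ω, ENNReal.ofReal (f x ω) ∂ℙ := by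
          exact Measurable.lintegral_prod_right' (ENNReal.measurable_ofReal.comp hFm)
        rw [integral_eq_lintegral_of_nonneg_ae
          (ae_of_all _ fun x => ENNReal.toReal_nonneg)
          hinner.ennreal_toReal.aestronglyMeasurable]
        congr 1
        exact lintegral_congr fun x =>
          ENNReal.ofReal_toReal ((hIle x).trans_lt ENNReal.one_lt_top).ne
    _ = (∫⁻ ω, ∫⁻ x : ℝ × ℝ, ENNReal.ofReal (f x ω) ∂volume ∂ℙ).toReal := by
        congr 1
        exact lintegral_lintegral_swap (ENNReal.measurable_ofReal.comp hFm).aemeasurable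
    _ = (∫⁻ ω, ENNReal.ofReal (π * s ^ (2/α) * Real.Gamma (1 - 2/α)) *
          ENNReal.ofReal (G ω ^ (2/α)) ∂ℙ).toReal := by
        congr 1
        apply lintegral_congr_ae
        filter_upwards [hGnn] with ω hω
        have hc : 0 ≤ s * G ω := mul_nonneg hs.le hω
        have e1 : ∀ x : ℝ × ℝ, ENNReal.ofReal (f x ω) =
            (fun y : ℝ × ℝ => ENNReal.ofReal
              (1 - Real.exp (-(s * G ω * Real.sqrt (y.1 ^ 2 + y.2 ^ 2) ^ (-α))))) (x + Y ω) := by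
          intro x
          simp only [hfdef, Prod.fst_add, Prod.snd_add]
        have hgm : Measurable fun y : ℝ × ℝ =>
            ENNReal.ofReal (1 - Real.exp (-(s * G ω * Real.sqrt (y.1 ^ 2 + y.2 ^ 2) ^ (-α)))) := by
          apply ENNReal.measurable_ofReal.comp
          apply measurable_const.sub
          apply Real.measurable_exp.comp
          apply Measurable.neg
          refine Measurable.const_mul ?_ (s * G ω)
          refine Measurable.pow ?_ measurable_const
          refine Real.continuous_sqrt.measurable.comp ?_
          exact (measurable_fst.pow_const 2).add (measurable_snd.pow_const 2)
        have etrans : ∫⁻ x : ℝ × ℝ, ENNReal.ofReal (f x ω) =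
            ∫⁻ y : ℝ × ℝ, ENNReal.ofReal
              (1 - Real.exp (-(s * G ω * Real.sqrt (y.1 ^ 2 + y.2 ^ 2) ^ (-α)))) := by
          rw [← lintegral_add_right_eq_self (fun y : ℝ × ℝ => ENNReal.ofReal
            (1 - Real.exp (-(s * G ω * Real.sqrt (y.1 ^ 2 + y.2 ^ 2) ^ (-α))))) (Y ω)]
          exact lintegral_congr e1
        rw [etrans, ← Complex.volume_preserving_equiv_real_prod.lintegral_comp hgm]
        have e2 : ∀ z : ℂ,
            ENNReal.ofReal (1 - Real.exp (-(s * G ω *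
              Real.sqrt ((Complex.measurableEquivRealProd z).1 ^ 2 +
                (Complex.measurableEquivRealProd z).2 ^ 2) ^ (-α)))) =
            ENNReal.ofReal (1 - Real.exp (-((s * G ω) * ‖z‖ ^ (-α)))) := by
          intro z
          congr 3
          rw [Complex.measurableEquivRealProd_apply]
          rw [Complex.norm_def, Complex.normSq_apply]
          congr 1
          ring
        rw [lintegral_congr e2, Stmt6Aux.spatial α hα hc]
        rw [Real.mul_rpow hs.le hω,
          ← ENNReal.ofReal_mul (mul_nonneg (mul_nonneg Real.pi_pos.le
            (Real.rpow_nonneg hs.le _)) hg1.le)]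
        congr 1
        ring
    _ = π * s ^ (2 / α) * Real.Gamma (1 + 2 / α) * Real.Gamma (1 - 2 / α) := by
        rw [lintegral_const_mul' _ _ ENNReal.ofReal_ne_top,
          Stmt6Aux.moment hGmeas hGexp hp,
          ← ENNReal.ofReal_mul (mul_nonneg (mul_nonneg Real.pi_pos.le
            (Real.rpow_nonneg hs.le _)) hg1.le),
          ENNReal.toReal_ofReal (mul_nonneg (mul_nonneg (mul_nonneg Real.pi_pos.le
            (Real.rpow_nonneg hs.le _)) hg1.le) hg2.le)]
        ring
end

section
/- Let α > 2, s > 0, σ > 0, n̄ > 0, λ_p > 0. Let Y be a random vector in ℝ² with i.i.d. centered Gaussian coordinates of variance σ², and for x ∈ ℝ² define ζ(x) = E[s/(‖x + Y‖^α + s)]. Then exp(−λ_p ∫_{ℝ²} (1 − exp(−n̄·ζ(x))) dx) ≥ exp(−π·n̄·λ_p·s^{2/α}·Γ(1 + 2/α)·Γ(1 − 2/α)). -/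
open MeasureTheory ProbabilityTheory Real

section AuxStmt7
open Set


lemma aux_exp_int {c : ℝ} (hc : 0 < c) :
    ∫ u in Ioi (0:ℝ), Real.exp (-(c * u)) = 1 / c := by
  have := integral_rpow_mul_exp_neg_mul_Ioi (a := 1) one_pos hc
  simpa [Real.rpow_one] using this

lemma aux1 {α s : ℝ} (hα : 2 < α) (hs : 0 < s) :
    ∫⁻ r in Ioi (0:ℝ), ENNReal.ofReal (r * (s / (r ^ α + s))) =
      ENNReal.ofReal (s ^ (2/α) * ((1/α) * (Real.Gamma (2/α) * Real.Gamma (1 - 2/α)))) := by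
  have hα0 : (0:ℝ) < α := by linarith
  have hα1 : (1:ℝ) ≤ α := by linarith
  have h2α : 0 < 2/α := by positivity
  have h2α1 : 2/α < 1 := by rw [div_lt_one hα0]; exact hα
  -- step 1: pointwise Gamma-trick
  have step1 : ∀ r ∈ Ioi (0:ℝ), ENNReal.ofReal (r * (s / (r ^ α + s))) =
      ∫⁻ u in Ioi (0:ℝ), ENNReal.ofReal ((r * s) * Real.exp (-((r ^ α + s) * u))) := by
    intro r hr
    have hr0 : (0:ℝ) < r := hr
    have hc : (0:ℝ) < r ^ α + s := by positivity
    have h0 := exp_neg_integrableOn_Ioi 0 hc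
    simp_rw [neg_mul] at h0
    have hint : IntegrableOn (fun u => (r * s) * Real.exp (-((r ^ α + s) * u))) (Ioi (0:ℝ)) :=
      h0.const_mul _
    rw [← ofReal_integral_eq_lintegral_ofReal hint ?_]
    · rw [MeasureTheory.integral_const_mul, aux_exp_int hc]
      congr 1
      field_simp
    · filter_upwards [self_mem_ae_restrict measurableSet_Ioi] with u hu
      positivity
  rw [setLIntegral_congr_fun measurableSet_Ioi step1]
  -- step 2: swap
  have hmeas : Measurable (Function.uncurry fun r u =>
      ENNReal.ofReal ((r * s) * Real.exp (-((r ^ α + s) * u)))) := by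
    apply Measurable.ennreal_ofReal
    fun_prop
  rw [lintegral_lintegral_swap hmeas.aemeasurable]
  -- step 3: inner integral over r
  have step3 : ∀ u ∈ Ioi (0:ℝ), (∫⁻ r in Ioi (0:ℝ),
      ENNReal.ofReal ((r * s) * Real.exp (-((r ^ α + s) * u)))) =
      ENNReal.ofReal ((s * (1/α) * Real.Gamma (2/α)) *
        (u ^ (-(2/α)) * Real.exp (-(s * u)))) := by
    intro u hu
    have hu0 : (0:ℝ) < u := hu
    have hptwise : ∀ r ∈ Ioi (0:ℝ), ENNReal.ofReal ((r * s) * Real.exp (-((r ^ α + s) * u))) =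
        ENNReal.ofReal ((s * Real.exp (-(s * u))) * (r ^ (1:ℝ) * Real.exp (-u * r ^ α))) := by
      intro r hr
      congr 1
      rw [Real.rpow_one]
      have : -((r ^ α + s) * u) = (-u * r ^ α) + (-(s * u)) := by ring
      rw [this, Real.exp_add]
      ring
    rw [setLIntegral_congr_fun measurableSet_Ioi hptwise]
    have hint : IntegrableOn (fun r => (s * Real.exp (-(s * u))) *
        (r ^ (1:ℝ) * Real.exp (-u * r ^ α))) (Ioi (0:ℝ)) :=
      (integrableOn_rpow_mul_exp_neg_mul_rpow (by norm_num) hα0 hu0).const_mul _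
    rw [← ofReal_integral_eq_lintegral_ofReal hint ?_]
    · rw [MeasureTheory.integral_const_mul,
        integral_rpow_mul_exp_neg_mul_rpow hα0 (by norm_num) hu0]
      congr 1
      rw [show -((1:ℝ)+1)/α = -(2/α) by ring]
      ring
    · filter_upwards [self_mem_ae_restrict measurableSet_Ioi] with r hr
      have : (0:ℝ) < r := hr
      positivity
  rw [setLIntegral_congr_fun measurableSet_Ioi step3]
  -- step 4: outer integral over u
  have hint : IntegrableOn (fun u => (s * (1/α) * Real.Gamma (2/α)) *
      (u ^ (-(2/α)) * Real.exp (-(s * u)))) (Ioi (0:ℝ)) := by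
    have h0 := integrableOn_rpow_mul_exp_neg_mul_rpow
      (s := -(2/α)) (p := 1) (b := s) (by linarith) one_pos hs
    simp_rw [Real.rpow_one, neg_mul] at h0
    exact h0.const_mul _
  rw [← ofReal_integral_eq_lintegral_ofReal hint ?_]
  · rw [MeasureTheory.integral_const_mul]
    have h1 := integral_rpow_mul_exp_neg_mul_Ioi (a := 1 - 2/α) (by linarith) hs
    rw [show (1:ℝ) - 2/α - 1 = -(2/α) by ring] at h1
    rw [h1]
    congr 1
    have hsne : s ≠ 0 := ne_of_gt hs
    rw [one_div s, Real.inv_rpow hs.le, ← Real.rpow_neg hs.le]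
    rw [show -(1 - 2/α) = 2/α - 1 by ring]
    have hmerge : s ^ (1:ℝ) * s ^ (2/α - 1) = s ^ (2/α) := by
      rw [← Real.rpow_add hs, show (1:ℝ) + (2/α - 1) = 2/α by ring]
    nth_rewrite 1 [← Real.rpow_one s]
    rw [show s ^ (1:ℝ) * (1/α) * Real.Gamma (2/α) * (s ^ (2/α - 1) * Real.Gamma (1 - 2/α))
        = (s ^ (1:ℝ) * s ^ (2/α - 1)) * ((1/α) * (Real.Gamma (2/α) * Real.Gamma (1 - 2/α)))
        from by ring, hmerge]
  · filter_upwards [self_mem_ae_restrict measurableSet_Ioi] with u hu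
    have : (0:ℝ) < u := hu
    have h2 : (0:ℝ) < Real.Gamma (2/α) := Real.Gamma_pos_of_pos h2α
    positivity

lemma aux2_meas {α s : ℝ} : Measurable (fun y : EuclideanSpace ℝ (Fin 2) => s / (‖y‖ ^ α + s)) := by
  fun_prop

lemma aux2_integrable {α s : ℝ} (hα : 2 < α) (hs : 0 < s) :
    Integrable (fun y : EuclideanSpace ℝ (Fin 2) => s / (‖y‖ ^ α + s)) := by
  have hα0 : (0:ℝ) < α := by linarith
  have hfin : (Module.finrank ℝ (EuclideanSpace ℝ (Fin 2)) : ℝ) < α := by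
    rw [finrank_euclideanSpace_fin]; norm_num; linarith
  have hbound := (integrable_one_add_norm (μ := (volume : Measure (EuclideanSpace ℝ (Fin 2))))
    hfin).const_mul ((2:ℝ) ^ α * max 1 s)
  refine hbound.mono' aux2_meas.aestronglyMeasurable ?_
  refine Filter.Eventually.of_forall fun y => ?_
  set t := ‖y‖ with ht
  have ht0 : 0 ≤ t := norm_nonneg y
  have htα : 0 ≤ t ^ α := Real.rpow_nonneg ht0 _
  have hd : 0 < t ^ α + s := by positivity
  have h1t : (0:ℝ) < 1 + t := by linarith
  have h1tα : (0:ℝ) < (1 + t) ^ α := Real.rpow_pos_of_pos h1t _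
  have hgnn : 0 ≤ s / (t ^ α + s) := by positivity
  rw [Real.norm_of_nonneg hgnn, Real.rpow_neg h1t.le, ← div_eq_mul_inv,
    div_le_div_iff₀ hd h1tα]
  -- s * (1+t)^α ≤ 2^α * max 1 s * (t^α + s)
  have key1 : (1 + t) ^ α ≤ 2 ^ α * (1 + t ^ α) := by
    have h1 : (1 + t) ^ α ≤ (2 * max 1 t) ^ α := by
      apply Real.rpow_le_rpow h1t.le _ hα0.le
      rcases le_total 1 t with h | h
      · rw [max_eq_right h]; linarith
      · rw [max_eq_left h]; linarith
    have h2 : (2 * max 1 t) ^ α = 2 ^ α * (max 1 t) ^ α := by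
      rw [Real.mul_rpow (by norm_num) (le_max_of_le_left zero_le_one)]
    have h3 : (max 1 t) ^ α ≤ 1 + t ^ α := by
      rcases le_total 1 t with h | h
      · rw [max_eq_right h]; linarith
      · rw [max_eq_left h]; rw [Real.one_rpow]; linarith
    calc (1 + t) ^ α ≤ 2 ^ α * (max 1 t) ^ α := h2 ▸ h1
      _ ≤ 2 ^ α * (1 + t ^ α) := by
          apply mul_le_mul_of_nonneg_left h3 (Real.rpow_nonneg (by norm_num) _)
  have h2α : (0:ℝ) < 2 ^ α := Real.rpow_pos_of_pos (by norm_num) _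
  have hmax1 : (1:ℝ) ≤ max 1 s := le_max_left _ _
  have hmaxs : s ≤ max 1 s := le_max_right _ _
  have hsum : s * (1 + t ^ α) ≤ (1 ⊔ s) * (t ^ α + s) := by
    nlinarith [mul_le_mul_of_nonneg_right hmaxs htα, mul_le_mul_of_nonneg_right hmax1 hs.le]
  calc s * (1 + t) ^ α ≤ s * (2 ^ α * (1 + t ^ α)) :=
        mul_le_mul_of_nonneg_left key1 hs.le
    _ = 2 ^ α * (s * (1 + t ^ α)) := by ring
    _ ≤ 2 ^ α * ((1 ⊔ s) * (t ^ α + s)) := mul_le_mul_of_nonneg_left hsum h2α.le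
    _ = 2 ^ α * max 1 s * (t ^ α + s) := by ring
lemma aux2_val {α s : ℝ} (hα : 2 < α) (hs : 0 < s) :
    ∫ y : EuclideanSpace ℝ (Fin 2), s / (‖y‖ ^ α + s) =
      π * s ^ (2/α) * Real.Gamma (1 + 2/α) * Real.Gamma (1 - 2/α) := by
  have hα0 : (0:ℝ) < α := by linarith
  have h2α : (0:ℝ) < 2/α := by positivity
  have h2α1 : 2/α < 1 := by rw [div_lt_one hα0]; exact hα
  have hG2 : (0:ℝ) < Real.Gamma (2/α) := Real.Gamma_pos_of_pos h2α
  have hG1 : (0:ℝ) < Real.Gamma (1 - 2/α) := Real.Gamma_pos_of_pos (by linarith)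
  set V1 : ℝ := s ^ (2/α) * ((1/α) * (Real.Gamma (2/α) * Real.Gamma (1 - 2/α))) with hV1
  have hV1nn : 0 ≤ V1 := by
    have : (0:ℝ) ≤ s ^ (2/α) := Real.rpow_nonneg hs.le _
    positivity
  have h := integral_fun_norm_addHaar (volume : Measure (EuclideanSpace ℝ (Fin 2)))
    (fun r => s / (r ^ α + s))
  rw [finrank_euclideanSpace_fin] at h
  -- compute the radial integral
  have hJ : ∫ r in Ioi (0:ℝ), r ^ (2 - 1 : ℕ) • (s / (r ^ α + s)) = V1 := by
    simp only [show (2-1:ℕ) = 1 by norm_num, pow_one, smul_eq_mul]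
    rw [MeasureTheory.integral_eq_lintegral_of_nonneg_ae]
    · rw [aux1 hα hs, ENNReal.toReal_ofReal hV1nn]
    · filter_upwards [self_mem_ae_restrict measurableSet_Ioi] with r hr
      have : (0:ℝ) < r := hr
      positivity
    · apply Measurable.aestronglyMeasurable; fun_prop
  rw [hJ] at h
  -- ball volume
  have hball : ((volume (Metric.ball (0 : EuclideanSpace ℝ (Fin 2)) 1)).toReal : ℝ) = π := by
    rw [EuclideanSpace.volume_ball]
    simp only [Fintype.card_fin]
    rw [ENNReal.ofReal_one, one_pow, one_mul]
    rw [show (Real.sqrt π ^ 2 / Real.Gamma ((2:ℕ) / 2 + 1) : ℝ) = π by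
      rw [Real.sq_sqrt Real.pi_pos.le]
      norm_num [Real.Gamma_two]]
    exact ENNReal.toReal_ofReal Real.pi_pos.le
  rw [measureReal_def, hball] at h
  rw [h]
  rw [show (1:ℝ) + 2/α = 2/α + 1 by ring, Real.Gamma_add_one (ne_of_gt h2α)]
  simp only [smul_eq_mul, nsmul_eq_mul, hV1]
  push_cast
  field_simp

lemma aux3 {α s : ℝ} (hα : 2 < α) (hs : 0 < s)
    (hi : Integrable (fun y : EuclideanSpace ℝ (Fin 2) => s / (‖y‖ ^ α + s))) :
    Integrable (fun x : ℝ × ℝ => s / (Real.sqrt (x.1 ^ 2 + x.2 ^ 2) ^ α + s)) ∧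
    ∫ x : ℝ × ℝ, s / (Real.sqrt (x.1 ^ 2 + x.2 ^ 2) ^ α + s) =
      π * s ^ (2/α) * Real.Gamma (1 + 2/α) * Real.Gamma (1 - 2/α) := by
  set ψ := (MeasurableEquiv.toLp 2 (Fin 2 → ℝ)).symm.trans (MeasurableEquiv.finTwoArrow) with hψdef
  have hψ : MeasurePreserving ψ volume volume := by
    rw [hψdef]
    exact (volume_preserving_finTwoArrow ℝ).comp
      (EuclideanSpace.volume_preserving_symm_measurableEquiv_toLp (Fin 2))
  have hcomp : (fun x : ℝ × ℝ => s / (Real.sqrt (x.1 ^ 2 + x.2 ^ 2) ^ α + s)) ∘ ψ =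
      fun y : EuclideanSpace ℝ (Fin 2) => s / (‖y‖ ^ α + s) := by
    funext y
    simp only [Function.comp_apply, hψdef, MeasurableEquiv.trans_apply]
    have h1 : (MeasurableEquiv.finTwoArrow (((MeasurableEquiv.toLp 2 (Fin 2 → ℝ)).symm) y))
        = (y 0, y 1) := by
      simp [MeasurableEquiv.finTwoArrow, MeasurableEquiv.coe_toLp_symm]
    have h2 : ‖y‖ = Real.sqrt ((y 0) ^ 2 + (y 1) ^ 2) := by
      rw [EuclideanSpace.norm_eq, Fin.sum_univ_two]
      simp [Real.norm_eq_abs, sq_abs]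
    rw [h1, h2]
  constructor
  · refine (hψ.integrable_comp_emb ψ.measurableEmbedding).mp ?_
    rw [hcomp]; exact hi
  · calc ∫ x : ℝ × ℝ, s / (Real.sqrt (x.1 ^ 2 + x.2 ^ 2) ^ α + s)
        = ∫ y, ((fun x : ℝ × ℝ => s / (Real.sqrt (x.1 ^ 2 + x.2 ^ 2) ^ α + s)) ∘ ψ) y :=
          (hψ.integral_comp ψ.measurableEmbedding _).symm
      _ = ∫ y : EuclideanSpace ℝ (Fin 2), s / (‖y‖ ^ α + s) := by rw [hcomp]
      _ = π * s ^ (2/α) * Real.Gamma (1 + 2/α) * Real.Gamma (1 - 2/α) := aux2_val hα hs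

end AuxStmt7

/-- Proposition 1 / Remark 1: with `α > 2`, `s > 0`, `σ > 0`, `n̄ > 0`, `λ_p > 0`, `Y` a
random vector in `ℝ²` with i.i.d. centered Gaussian coordinates of variance `σ²`, and
`ζ(x) = E[s/(‖x + Y‖^α + s)]`, the exact conditional Laplace transform of the
Thomas-cluster-process interference is bounded below by the PPP one of density `n̄·λ_p`:
`exp(−λ_p ∫_{ℝ²} (1 − exp(−n̄·ζ(x))) dx) ≥ exp(−π·n̄·λ_p·s^{2/α}·Γ(1+2/α)·Γ(1−2/α))`. -/
theorem stmt_7 {Ω : Type*} [MeasureSpace Ω] [IsProbabilityMeasure (ℙ : Measure Ω)]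
    (α s σ nbar lam_p : ℝ) (hα : 2 < α) (hs : 0 < s) (hσ : 0 < σ)
    (hnbar : 0 < nbar) (hlam_p : 0 < lam_p)
    (Y : Ω → ℝ × ℝ) (hYmeas : Measurable Y)
    (hY1gauss : Measure.map (fun ω => (Y ω).1) ℙ = gaussianReal 0 ⟨σ ^ 2, sq_nonneg σ⟩)
    (hY2gauss : Measure.map (fun ω => (Y ω).2) ℙ = gaussianReal 0 ⟨σ ^ 2, sq_nonneg σ⟩)
    (hYindep : IndepFun (fun ω => (Y ω).1) (fun ω => (Y ω).2) ℙ)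
    (ζ : ℝ × ℝ → ℝ)
    (hζ : ∀ x : ℝ × ℝ, ζ x = ∫ ω, s /
      (Real.sqrt ((x.1 + (Y ω).1) ^ 2 + (x.2 + (Y ω).2) ^ 2) ^ α + s)) :
    Real.exp (-(lam_p * ∫ x : ℝ × ℝ, (1 - Real.exp (-(nbar * ζ x)))))
      ≥ Real.exp (-(π * nbar * lam_p * s ^ (2 / α) *
          Real.Gamma (1 + 2 / α) * Real.Gamma (1 - 2 / α))) := by
  have hα0 : (0:ℝ) < α := by linarith
  have h2α : (0:ℝ) < 2/α := by positivity
  have h2α1 : 2/α < 1 := by rw [div_lt_one hα0]; exact hα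
  have hG2 : (0:ℝ) < Real.Gamma (1 + 2/α) := Real.Gamma_pos_of_pos (by linarith)
  have hG1 : (0:ℝ) < Real.Gamma (1 - 2/α) := Real.Gamma_pos_of_pos (by linarith)
  have hsp : (0:ℝ) < s ^ (2/α) := Real.rpow_pos_of_pos hs _
  set f : ℝ × ℝ → ℝ := fun x => s / (Real.sqrt (x.1 ^ 2 + x.2 ^ 2) ^ α + s) with hf
  set Cval : ℝ := π * s ^ (2/α) * Real.Gamma (1 + 2/α) * Real.Gamma (1 - 2/α) with hCval
  have hCpos : 0 < Cval := by
    rw [hCval]; have := Real.pi_pos; positivity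
  obtain ⟨hfInt, hfVal⟩ := aux3 hα hs (aux2_integrable hα hs)
  have hfmeas : Measurable f := by rw [hf]; fun_prop
  have hfnn : ∀ x, 0 ≤ f x := by
    intro x
    have h1 : (0:ℝ) ≤ Real.sqrt (x.1 ^ 2 + x.2 ^ 2) ^ α :=
      Real.rpow_nonneg (Real.sqrt_nonneg _) _
    rw [hf]; positivity
  have hfle : ∀ x, f x ≤ 1 := by
    intro x
    have h1 : (0:ℝ) ≤ Real.sqrt (x.1 ^ 2 + x.2 ^ 2) ^ α :=
      Real.rpow_nonneg (Real.sqrt_nonneg _) _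
    rw [hf, div_le_one (by positivity)]
    linarith
  have hL : ∫⁻ x : ℝ × ℝ, ENNReal.ofReal (f x) = ENNReal.ofReal Cval := by
    rw [← ofReal_integral_eq_lintegral_ofReal hfInt (Filter.Eventually.of_forall hfnn)]
    rw [hf, hCval] at *
    exact congrArg ENNReal.ofReal hfVal
  have hζ' : ∀ x, ζ x = ∫ ω, f (x + Y ω) := by
    intro x
    rw [hζ x]
    rfl
  have hcompmeas : Measurable (Function.uncurry
      (fun (x : ℝ × ℝ) (ω : Ω) => ENNReal.ofReal (f (x + Y ω)))) :=
    (hfmeas.comp (measurable_fst.add (hYmeas.comp measurable_snd))).ennreal_ofReal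
  have hIntg : ∀ x, Integrable (fun ω => f (x + Y ω)) ℙ := by
    intro x
    refine (integrable_const (1:ℝ)).mono'
      ((hfmeas.comp (measurable_const.add hYmeas)).aestronglyMeasurable)
      (Filter.Eventually.of_forall fun ω => ?_)
    rw [Real.norm_of_nonneg (hfnn _)]
    exact hfle _
  have hζofReal : ∀ x, ENNReal.ofReal (ζ x) = ∫⁻ ω, ENNReal.ofReal (f (x + Y ω)) := by
    intro x
    rw [hζ' x, ofReal_integral_eq_lintegral_ofReal (hIntg x)
      (Filter.Eventually.of_forall fun ω => hfnn _)]
  have hζnn : ∀ x, 0 ≤ ζ x := by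
    intro x
    rw [hζ' x]
    exact integral_nonneg fun ω => hfnn _
  have hζmeas : Measurable ζ := by
    have hrepr : ζ = fun x => (∫⁻ ω, ENNReal.ofReal (f (x + Y ω))).toReal := by
      funext x
      rw [← hζofReal x, ENNReal.toReal_ofReal (hζnn x)]
    rw [hrepr]
    exact (Measurable.lintegral_prod_right hcompmeas).ennreal_toReal
  have hζL : ∫⁻ x : ℝ × ℝ, ENNReal.ofReal (ζ x) = ENNReal.ofReal Cval := by
    calc ∫⁻ x : ℝ × ℝ, ENNReal.ofReal (ζ x)
        = ∫⁻ x : ℝ × ℝ, ∫⁻ ω, ENNReal.ofReal (f (x + Y ω)) ∂ℙ :=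
          lintegral_congr fun x => hζofReal x
      _ = ∫⁻ ω, ∫⁻ x : ℝ × ℝ, ENNReal.ofReal (f (x + Y ω)) ∂volume ∂ℙ :=
          lintegral_lintegral_swap hcompmeas.aemeasurable
      _ = ∫⁻ _ω : Ω, ENNReal.ofReal Cval ∂ℙ := by
          refine lintegral_congr fun ω => ?_
          rw [← hL]
          exact lintegral_add_right_eq_self (fun x => ENNReal.ofReal (f x)) (Y ω)
      _ = ENNReal.ofReal Cval := by simp
  have hmono : ∫ x : ℝ × ℝ, (1 - Real.exp (-(nbar * ζ x))) ≤ nbar * Cval := by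
    have hnn : ∀ x, 0 ≤ 1 - Real.exp (-(nbar * ζ x)) := by
      intro x
      have h1 : -(nbar * ζ x) ≤ 0 := by
        have := mul_nonneg hnbar.le (hζnn x)
        linarith
      have := Real.exp_le_one_iff.mpr h1
      linarith
    have hub : ∀ x, 1 - Real.exp (-(nbar * ζ x)) ≤ nbar * ζ x := by
      intro x
      have h := Real.add_one_le_exp (-(nbar * ζ x))
      linarith
    have hmeas2 : Measurable (fun x => 1 - Real.exp (-(nbar * ζ x))) :=
      measurable_const.sub (((hζmeas.const_mul nbar).neg).exp)
    rw [MeasureTheory.integral_eq_lintegral_of_nonneg_ae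
      (Filter.Eventually.of_forall hnn) hmeas2.aestronglyMeasurable]
    have hb1 : ∫⁻ x : ℝ × ℝ, ENNReal.ofReal (1 - Real.exp (-(nbar * ζ x)))
        ≤ ENNReal.ofReal nbar * ENNReal.ofReal Cval := by
      calc ∫⁻ x : ℝ × ℝ, ENNReal.ofReal (1 - Real.exp (-(nbar * ζ x)))
          ≤ ∫⁻ x : ℝ × ℝ, ENNReal.ofReal (nbar * ζ x) :=
            lintegral_mono fun x => ENNReal.ofReal_le_ofReal (hub x)
        _ = ENNReal.ofReal nbar * ENNReal.ofReal Cval := by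
            simp_rw [ENNReal.ofReal_mul hnbar.le]
            rw [lintegral_const_mul' _ _ ENNReal.ofReal_ne_top, hζL]
    calc (∫⁻ x : ℝ × ℝ, ENNReal.ofReal (1 - Real.exp (-(nbar * ζ x)))).toReal
        ≤ (ENNReal.ofReal nbar * ENNReal.ofReal Cval).toReal :=
          ENNReal.toReal_mono (by rw [← ENNReal.ofReal_mul hnbar.le]; exact ENNReal.ofReal_ne_top) hb1
      _ = nbar * Cval := by
          rw [← ENNReal.ofReal_mul hnbar.le,
            ENNReal.toReal_ofReal (mul_nonneg hnbar.le hCpos.le)]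
  rw [ge_iff_le, Real.exp_le_exp]
  apply neg_le_neg
  calc lam_p * ∫ x : ℝ × ℝ, (1 - Real.exp (-(nbar * ζ x)))
      ≤ lam_p * (nbar * Cval) := mul_le_mul_of_nonneg_left hmono hlam_p.le
    _ = π * nbar * lam_p * s ^ (2 / α) * Real.Gamma (1 + 2 / α) * Real.Gamma (1 - 2 / α) := by
        rw [hCval]; ring
end
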